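/- Let R be a commutative ring and let I = (f_1, ..., f_m) be an ideal of R generated by a regular sequence f_1, ..., f_m. Then for all positive integers n, i with n ≥ i > 0 and every index j ∈ {1, ..., m}, the colon ideal (I^n : f_j^i) = { r ∈ R | r·f_j^i ∈ I^n } equals I^{n-i}. -/

import Mathlib

open MvPolynomial

namespace ColonRegularAux

variable {R : Type*} [CommRing R] {m : ℕ}

/-- The ideal generated by the first `k` elements of the sequence. -/
def J (f : Fin m → R) (k : ℕ) : Ideal R := Ideal.span (f '' {l : Fin m | (l : ℕ) < k})

lemma J_mono (f : Fin m → R) {k k' : ℕ} (h : k ≤ k') : J f k ≤ J f k' :=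
  Ideal.span_mono (Set.image_mono fun _ hl => lt_of_lt_of_le hl h)

lemma mem_J (f : Fin m → R) {k : ℕ} {l : Fin m} (hl : (l : ℕ) < k) : f l ∈ J f k :=
  Ideal.subset_span ⟨l, hl, rfl⟩

lemma w1_eq (a : Fin m →₀ ℕ) :
    (Finsupp.weight (1 : Fin m → ℕ)) a = ∑ i ∈ a.support, a i := by
  have : Finsupp.degree a = (Finsupp.weight (1 : Fin m → ℕ)) a := by
    rw [Finsupp.degree_eq_weight_one]; rfl
  rw [← this]; rfl

lemma w1_single (i : Fin m) (n : ℕ) :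
    (Finsupp.weight (1 : Fin m → ℕ)) (Finsupp.single i n) = n := by
  simp [Finsupp.weight_apply, Finsupp.sum_single_index]

lemma prod_pow_mem {ι : Type*} (P : Ideal R) (s : Finset ι) (g : ι → R) (e : ι → ℕ)
    (h : ∀ i ∈ s, g i ∈ P) : (∏ i ∈ s, g i ^ e i) ∈ P ^ (∑ i ∈ s, e i) := by
  classical
  induction s using Finset.induction_on with
  | empty => simp [Ideal.one_eq_top]
  | @insert i s hi ih =>
    rw [Finset.prod_insert hi, Finset.sum_insert hi, pow_add]
    exact Ideal.mul_mem_mul (Ideal.pow_mem_pow (h i (Finset.mem_insert_self _ _)) _)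
      (ih fun j hj => h j (Finset.mem_insert_of_mem hj))

/-- Evaluation of a homogeneous polynomial with coefficients in `I₀` and variables among
the first `k` lands in `I₀ * J f k ^ d`. -/
lemma eval_mem (f : Fin m → R) {k d : ℕ} {I₀ : Ideal R} {F : MvPolynomial (Fin m) R}
    (hF : F.IsHomogeneous d) (hv : ∀ l ∈ F.vars, (l : ℕ) < k)
    (hc : ∀ a, F.coeff a ∈ I₀) :
    MvPolynomial.eval f F ∈ I₀ * J f k ^ d := by
  rw [eval_eq]
  refine Ideal.sum_mem _ fun a ha => ?_
  have hca : F.coeff a ≠ 0 := mem_support_iff.mp ha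
  have hdeg : (∑ i ∈ a.support, a i) = d := by rw [← w1_eq]; exact hF hca
  rw [← hdeg]
  exact Ideal.mul_mem_mul (hc a)
    (prod_pow_mem _ _ _ _ fun i hi => mem_J f (hv i ((mem_vars i).mpr ⟨a, ha, hi⟩)))

lemma eval_mem_top (f : Fin m → R) {k d : ℕ} {F : MvPolynomial (Fin m) R}
    (hF : F.IsHomogeneous d) (hv : ∀ l ∈ F.vars, (l : ℕ) < k) :
    MvPolynomial.eval f F ∈ J f k ^ d := by
  have := eval_mem (I₀ := (⊤ : Ideal R)) f hF hv (fun a => trivial)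
  simpa [Ideal.top_mul] using this

/-- Every element of `J f k ^ d` is the value of a homogeneous degree `d` polynomial in the
first `k` variables. -/
lemma exists_poly (f : Fin m → R) (k : ℕ) :
    ∀ (d : ℕ) (x : R), x ∈ J f k ^ d →
      ∃ F : MvPolynomial (Fin m) R, F.IsHomogeneous d ∧ (∀ l ∈ F.vars, (l : ℕ) < k) ∧
        MvPolynomial.eval f F = x := by
  classical
  intro d
  induction d with
  | zero =>
    intro x _
    refine ⟨C x, isHomogeneous_C _ _, ?_, by simp⟩
    intro l hl
    rcases (mem_vars l).mp hl with ⟨a, ha, hla⟩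
    have : (C x : MvPolynomial (Fin m) R).coeff a ≠ 0 := mem_support_iff.mp ha
    rw [coeff_C] at this
    by_cases h0 : a = 0
    · subst h0; simp at hla
    · simp [Ne.symm h0] at this
  | succ d ih =>
    intro x hx
    rw [pow_succ'] at hx
    refine Submodule.mul_induction_on hx ?_ ?_
    · intro y hy z hz
      obtain ⟨Fz, hFz, hvz, hez⟩ := ih z hz
      have hy1 : ∃ G : MvPolynomial (Fin m) R, G.IsHomogeneous 1 ∧
          (∀ l ∈ G.vars, (l : ℕ) < k) ∧ MvPolynomial.eval f G = y := by
        refine Submodule.span_induction ?_ ?_ ?_ ?_ hy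
        · rintro _ ⟨l, hl, rfl⟩
          refine ⟨X l, isHomogeneous_X _ _, ?_, by simp⟩
          intro l' hl'
          rcases (mem_vars l').mp hl' with ⟨a, ha, hla⟩
          have hc : (X l : MvPolynomial (Fin m) R).coeff a ≠ 0 := mem_support_iff.mp ha
          rw [coeff_X'] at hc
          by_cases he : Finsupp.single l 1 = a
          · subst he
            have : l' = l := Finset.mem_singleton.mp (Finsupp.support_single_subset hla)
            exact this ▸ hl
          · simp [he] at hc
        · exact ⟨0, isHomogeneous_zero _ _ _, by simp [vars_0], by simp⟩
        · rintro a b _ _ ⟨Fa, h1, h2, h3⟩ ⟨Fb, g1, g2, g3⟩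
          refine ⟨Fa + Fb, h1.add g1, ?_, by simp [h3, g3]⟩
          intro l hl
          rcases Finset.mem_union.mp (vars_add_subset _ _ hl) with h | h
          · exact h2 l h
          · exact g2 l h
        · rintro c a _ ⟨Fa, h1, h2, h3⟩
          refine ⟨C c * Fa, h1.C_mul c, ?_, by simp [h3]⟩
          intro l hl
          rcases (mem_vars l).mp hl with ⟨a', ha', hla'⟩
          have hc : (C c * Fa).coeff a' ≠ 0 := mem_support_iff.mp ha'
          rw [coeff_C_mul] at hc
          exact h2 l ((mem_vars l).mpr ⟨a', mem_support_iff.mpr (fun h => hc (by simp [h])), hla'⟩)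
      obtain ⟨G, hG, hvG, heG⟩ := hy1
      refine ⟨G * Fz, by have h := hG.mul hFz; rwa [add_comm] at h, ?_, by simp [heG, hez]⟩
      intro l hl
      rcases Finset.mem_union.mp (vars_mul _ _ hl) with h | h
      · exact hvG l h
      · exact hvz l h
    · rintro x1 x2 ⟨F1, h1, hv1, he1⟩ ⟨F2, h2, hv2, he2⟩
      refine ⟨F1 + F2, h1.add h2, ?_, by simp [he1, he2]⟩
      intro l hl
      rcases Finset.mem_union.mp (vars_add_subset _ _ hl) with h | h
      · exact hv1 l h
      · exact hv2 l h

lemma decomp1 (f : Fin m → R) {k : ℕ} (hk : k < m) :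
    J f (k + 1) ≤ J f k ⊔ Ideal.span {f ⟨k, hk⟩} := by
  rw [J, Ideal.span_le]
  rintro _ ⟨l, hl, rfl⟩
  by_cases h : (l : ℕ) < k
  · exact Submodule.mem_sup_left (mem_J f h)
  · have : l = ⟨k, hk⟩ := by
      apply Fin.ext
      show (l : ℕ) = k
      simp only [Set.mem_setOf_eq] at hl
      omega
    exact Submodule.mem_sup_right (this ▸ Ideal.subset_span rfl)

lemma pow_decomp (f : Fin m → R) {k : ℕ} (hk : k < m) (e : ℕ) :
    J f (k + 1) ^ (e + 1) ≤ J f k ^ (e + 1) ⊔ Ideal.span {f ⟨k, hk⟩} * J f (k + 1) ^ e := by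
  set S := Ideal.span {f ⟨k, hk⟩}
  have hSJ : S ≤ J f (k + 1) := by
    rw [Ideal.span_le]; rintro _ rfl; exact mem_J f (by simp)
  induction e with
  | zero =>
    simpa [Ideal.mul_top] using decomp1 f hk
  | succ e ih =>
    calc J f (k + 1) ^ (e + 2) = J f (k + 1) * J f (k + 1) ^ (e + 1) := by rw [← pow_succ']
    _ ≤ (J f k ⊔ S) * (J f k ^ (e + 1) ⊔ S * J f (k + 1) ^ e) :=
        Ideal.mul_mono (decomp1 f hk) ih
    _ ≤ J f k ^ (e + 2) ⊔ S * J f (k + 1) ^ (e + 1) := by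
        have hstep : ∀ T : Ideal R, T ≤ J f (k + 1) →
            T * J f (k + 1) ^ e ≤ J f (k + 1) ^ (e + 1) := by
          intro T hT
          rw [pow_succ']
          exact Ideal.mul_mono_left hT
        rw [Ideal.sup_mul, Ideal.mul_sup, Ideal.mul_sup]
        refine sup_le (sup_le ?_ ?_) (sup_le ?_ ?_)
        · rw [← pow_succ']; exact le_sup_left
        · have heq : J f k * (S * J f (k + 1) ^ e) = S * (J f k * J f (k + 1) ^ e) := by ring
          rw [heq]
          exact le_sup_of_le_right
            (Ideal.mul_mono_right (hstep _ (J_mono f (Nat.le_succ k))))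
        · exact le_sup_of_le_right
            (Ideal.mul_mono_right (Ideal.pow_right_mono (J_mono f (Nat.le_succ k)) _))
        · exact le_sup_of_le_right (Ideal.mul_mono_right (hstep _ hSJ))

/-- The quasi-regularity statement at level `k`. -/
def QRp (f : Fin m → R) (k : ℕ) : Prop :=
  ∀ (d : ℕ) (F : MvPolynomial (Fin m) R), F.IsHomogeneous d →
    (∀ l ∈ F.vars, (l : ℕ) < k) →
    MvPolynomial.eval f F ∈ J f k ^ (d + 1) → ∀ a, F.coeff a ∈ J f k

lemma colon_of_QR (f : Fin m → R) {k : ℕ} (hk : k < m)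
    (hreg : ∀ r : R, r * f ⟨k, hk⟩ ∈ J f k → r ∈ J f k)
    (hQR : QRp f k) :
    ∀ (d : ℕ) (r : R), r * f ⟨k, hk⟩ ∈ J f k ^ d → r ∈ J f k ^ d := by
  intro d
  induction d with
  | zero => intro r _; simp [Ideal.one_eq_top]
  | succ d ih =>
    intro r hr
    have hrd : r ∈ J f k ^ d := ih r (Ideal.pow_le_pow_right (Nat.le_succ d) hr)
    obtain ⟨P, hP, hvP, heP⟩ := exists_poly f k d r hrd
    have hvCP : ∀ l : Fin m, l ∈ (C (f ⟨k, hk⟩) * P).vars → (l : ℕ) < k := by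
      intro l hl
      rcases (mem_vars l).mp hl with ⟨a', ha', hla'⟩
      have hc : (C (f ⟨k, hk⟩) * P).coeff a' ≠ 0 := mem_support_iff.mp ha'
      rw [coeff_C_mul] at hc
      exact hvP l ((mem_vars l).mpr ⟨a', mem_support_iff.mpr (fun h => hc (by simp [h])), hla'⟩)
    have hev : MvPolynomial.eval f (C (f ⟨k, hk⟩) * P) ∈ J f k ^ (d + 1) := by
      rw [map_mul, eval_C, heP, mul_comm]; exact hr
    have hco := hQR d (C (f ⟨k, hk⟩) * P) (hP.C_mul _) hvCP hev
    have hcoP : ∀ a, P.coeff a ∈ J f k := by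
      intro a
      have := hco a
      rw [coeff_C_mul] at this
      exact hreg _ (by rwa [mul_comm])
    have := eval_mem (I₀ := J f k) f hP hvP hcoP
    rw [heP] at this
    rwa [pow_succ']

theorem QR_all (f : Fin m → R)
    (hreg : ∀ k : Fin m, ∀ r : R,
      r * f k ∈ Ideal.span (f '' {l : Fin m | l < k}) →
      r ∈ Ideal.span (f '' {l : Fin m | l < k})) :
    ∀ k, k ≤ m → QRp f k := by
  have hreg' : ∀ (k : ℕ) (hk : k < m) (r : R), r * f ⟨k, hk⟩ ∈ J f k → r ∈ J f k := by
    intro k hk r h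
    have hset : {l : Fin m | l < (⟨k, hk⟩ : Fin m)} = {l : Fin m | (l : ℕ) < k} := by
      ext l; exact Fin.lt_def
    have := hreg ⟨k, hk⟩ r
    rw [hset] at this
    exact this h
  intro k
  induction k with
  | zero =>
    intro _ d F hF hv hev a
    have hJ0 : J f 0 = ⊥ := by
      rw [J]
      have : {l : Fin m | (l : ℕ) < 0} = ∅ := by ext l; simp
      rw [this, Set.image_empty, Ideal.span_empty]
    -- all coefficients at nonzero indices vanish
    have hzero : ∀ a : Fin m →₀ ℕ, a ≠ 0 → F.coeff a = 0 := by
      intro a ha0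
      by_contra hc
      obtain ⟨l, hl⟩ : ∃ l, a l ≠ 0 := by
        by_contra h
        push_neg at h
        exact ha0 (Finsupp.ext h)
      have : l ∈ F.vars := (mem_vars l).mpr
        ⟨a, mem_support_iff.mpr hc, Finsupp.mem_support_iff.mpr hl⟩
      exact absurd (hv l this) (by omega)
    have hFC : F = C (F.coeff 0) := by
      ext a
      rw [coeff_C]
      by_cases h0 : a = 0
      · subst h0; simp
      · simp [Ne.symm h0, hzero a h0]
    have h0 : F.coeff 0 = 0 := by
      have : MvPolynomial.eval f F = F.coeff 0 := by rw [hFC]; simp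
      rw [hJ0] at hev
      have hb : MvPolynomial.eval f F = 0 := by
        have hbp : (⊥ : Ideal R) ^ (d + 1) = ⊥ := by
          rw [← Ideal.zero_eq_bot, zero_pow (Nat.succ_ne_zero d)]
        rw [hbp] at hev
        exact Ideal.mem_bot.mp hev
      rw [this] at hb; exact hb
    rw [hJ0, Ideal.mem_bot]
    by_cases h : a = 0
    · subst h; exact h0
    · exact hzero a h
  | succ k ihk =>
    intro hk1
    have hk : k < m := hk1
    have hQRk : QRp f k := ihk (le_of_lt hk)
    have hcolon := colon_of_QR f hk (hreg' k hk) hQRk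
    set x := f ⟨k, hk⟩ with hx
    set s : Fin m →₀ ℕ := Finsupp.single ⟨k, hk⟩ 1 with hs
    intro d
    induction d with
    | zero =>
      intro F hF hv hev a
      have hFC : F = C (F.coeff 0) := by
        ext a'
        rw [coeff_C]
        by_cases h0 : a' = 0
        · subst h0; simp
        · have : F.coeff a' = 0 := by
            by_contra hc
            have := hF hc
            rw [show (Finsupp.weight (1 : Fin m → ℕ)) a' = Finsupp.degree a' from
              (by rw [Finsupp.degree_eq_weight_one]; rfl)] at this
            exact h0 ((Finsupp.degree_eq_zero_iff a').mp this)
          simp [Ne.symm h0, this]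
      by_cases h : a = 0
      · subst h
        have : MvPolynomial.eval f F = F.coeff 0 := by rw [hFC]; simp
        rw [← this]
        simpa using hev
      · have : F.coeff a = 0 := by
          rw [hFC, coeff_C]; simp [Ne.symm h]
        rw [this]; exact Ideal.zero_mem _
    | succ d ihd =>
      intro F hF hv hev a
      set H := MvPolynomial.divMonomial F s with hH
      set G := MvPolynomial.modMonomial F s with hG
      have hFHG : monomial s 1 * H + G = F := divMonomial_add_modMonomial F s
      -- H is homogeneous of degree d
      have hHhom : H.IsHomogeneous d := by
        intro a' ha'
        have hFa : F.coeff (s + a') ≠ 0 := by rwa [hH, coeff_divMonomial] at ha'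
        have h1 := hF hFa
        rw [map_add, w1_single] at h1
        omega
      -- vars of H are among the first k+1
      have hvH : ∀ l : Fin m, l ∈ H.vars → (l : ℕ) < k + 1 := by
        intro l hl
        rcases (mem_vars l).mp hl with ⟨a', ha', hla'⟩
        have hFa : F.coeff (s + a') ≠ 0 := by
          have h0 := mem_support_iff.mp ha'
          rwa [hH, coeff_divMonomial] at h0
        refine hv l ((mem_vars l).mpr ⟨s + a', mem_support_iff.mpr hFa, ?_⟩)
        rw [Finsupp.mem_support_iff] at hla' ⊢
        simp only [Finsupp.add_apply]
        omega
      -- G is homogeneous of degree d+1 with vars among the first k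
      have hGcoeff : ∀ a', G.coeff a' ≠ 0 → (¬ s ≤ a') ∧ G.coeff a' = F.coeff a' := by
        intro a' h
        by_cases hle : s ≤ a'
        · rw [hG, coeff_modMonomial_of_le F hle] at h; exact absurd rfl h
        · exact ⟨hle, by rw [hG, coeff_modMonomial_of_not_le F hle]⟩
      have hGhom : G.IsHomogeneous (d + 1) := by
        intro a' ha'
        obtain ⟨-, he⟩ := hGcoeff a' ha'
        exact hF (he ▸ ha')
      have hvG : ∀ l : Fin m, l ∈ G.vars → (l : ℕ) < k := by
        intro l hl
        rcases (mem_vars l).mp hl with ⟨a', ha', hla'⟩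
        have hne := mem_support_iff.mp ha'
        obtain ⟨hnle, he⟩ := hGcoeff a' hne
        have hlk1 : (l : ℕ) < k + 1 :=
          hv l ((mem_vars l).mpr ⟨a', mem_support_iff.mpr (he ▸ hne), hla'⟩)
        have hak : a' ⟨k, hk⟩ = 0 := by
          by_contra hc
          exact hnle (Finsupp.single_le_iff.mpr (by omega))
        have : l ≠ ⟨k, hk⟩ := by
          intro hlk
          exact (Finsupp.mem_support_iff.mp hla') (hlk ▸ hak)
        have : (l : ℕ) ≠ k := fun h => this (Fin.ext h)
        omega
      -- evaluation identity
      have hevF : MvPolynomial.eval f F =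
          x * MvPolynomial.eval f H + MvPolynomial.eval f G := by
        conv_lhs => rw [← hFHG]
        rw [map_add, map_mul, eval_monomial, hs, Finsupp.prod_single_index (by simp),
          pow_one, one_mul, hx]
      -- decompose eval F
      have hdec := pow_decomp f hk (d + 1) hev
      rw [Submodule.mem_sup] at hdec
      obtain ⟨aa, haa, bb, hbb, hab⟩ := hdec
      rw [Ideal.mem_span_singleton_mul] at hbb
      obtain ⟨b, hb, hbeq⟩ := hbb
      -- x * (b - eval H) ∈ J f k ^ (d+1)
      have hGJ : MvPolynomial.eval f G ∈ J f k ^ (d + 1) := eval_mem_top f hGhom hvG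
      have key1 : x * (b - MvPolynomial.eval f H) ∈ J f k ^ (d + 1) := by
        have : x * (b - MvPolynomial.eval f H) = (MvPolynomial.eval f G - aa) := by
          have h1 : x * MvPolynomial.eval f H + MvPolynomial.eval f G = aa + x * b := by
            rw [← hevF, ← hab, ← hbeq]
          linear_combination -h1
        rw [this]
        exact Ideal.sub_mem _ hGJ (Ideal.pow_le_pow_right (Nat.le_succ _) haa)
      have key2 : b - MvPolynomial.eval f H ∈ J f k ^ (d + 1) :=
        hcolon (d + 1) _ (by rwa [mul_comm] at key1)
      -- eval H ∈ J f (k+1) ^ (d+1)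
      have hevH : MvPolynomial.eval f H ∈ J f (k + 1) ^ (d + 1) := by
        have : MvPolynomial.eval f H = b - (b - MvPolynomial.eval f H) := by ring
        rw [this]
        exact Ideal.sub_mem _ hb (Ideal.pow_right_mono (J_mono f (Nat.le_succ k)) _ key2)
      -- coefficients of H are in J f (k+1) by inner induction
      have hcoH : ∀ a', H.coeff a' ∈ J f (k + 1) := ihd H hHhom hvH hevH
      -- eval G ∈ J f (k+1) ^ (d+2)
      have hevG2 : MvPolynomial.eval f G ∈ J f (k + 1) ^ (d + 2) := by
        have hxH : x * MvPolynomial.eval f H ∈ J f (k + 1) ^ (d + 2) := by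
          have h1 : MvPolynomial.eval f H ∈ J f (k + 1) * J f (k + 1) ^ d := by
            have := eval_mem (I₀ := J f (k + 1)) f hHhom hvH hcoH
            exact this
          have h2 : x ∈ J f (k + 1) := mem_J f (by simp)
          have h3 : x * MvPolynomial.eval f H ∈
              J f (k + 1) * (J f (k + 1) * J f (k + 1) ^ d) := Ideal.mul_mem_mul h2 h1
          have heq : J f (k + 1) * (J f (k + 1) * J f (k + 1) ^ d)
              = J f (k + 1) ^ (d + 2) := by ring
          rwa [heq] at h3
        have : MvPolynomial.eval f G =
            MvPolynomial.eval f F - x * MvPolynomial.eval f H := by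
          rw [hevF]; ring
        rw [this]
        exact Ideal.sub_mem _ hev hxH
      -- decompose eval G
      have hdecG := pow_decomp f hk (d + 1) hevG2
      rw [Submodule.mem_sup] at hdecG
      obtain ⟨aa', haa', bb', hbb', hab'⟩ := hdecG
      rw [Ideal.mem_span_singleton_mul] at hbb'
      obtain ⟨b', hb', hbeq'⟩ := hbb'
      have key3 : x * b' ∈ J f k ^ (d + 1) := by
        have : x * b' = MvPolynomial.eval f G - aa' := by
          rw [← hab', ← hbeq']; ring
        rw [this]
        exact Ideal.sub_mem _ hGJ (Ideal.pow_le_pow_right (Nat.le_succ _) haa')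
      have hb'J : b' ∈ J f k ^ (d + 1) := hcolon (d + 1) _ (by rwa [mul_comm] at key3)
      obtain ⟨P, hPhom, hvP, hePb⟩ := exists_poly f k (d + 1) b' hb'J
      -- G - C x * P has value in J f k ^ (d+2)
      have hGP : MvPolynomial.eval f (G - C x * P) ∈ J f k ^ (d + 2) := by
        rw [map_sub, map_mul, eval_C, hePb]
        have : MvPolynomial.eval f G - x * b' = aa' := by rw [← hab', ← hbeq']; ring
        rw [this]
        exact haa'
      have hvGP : ∀ l : Fin m, l ∈ (G - C x * P).vars → (l : ℕ) < k := by
        intro l hl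
        classical
        rcases (mem_vars l).mp hl with ⟨a', ha', hla'⟩
        have hc : (G - C x * P).coeff a' ≠ 0 := mem_support_iff.mp ha'
        rw [coeff_sub, coeff_C_mul] at hc
        by_cases h1 : G.coeff a' ≠ 0
        · exact hvG l ((mem_vars l).mpr ⟨a', mem_support_iff.mpr h1, hla'⟩)
        · push_neg at h1
          have h2 : P.coeff a' ≠ 0 := by
            intro h2; rw [h1, h2] at hc; simp at hc
          exact hvP l ((mem_vars l).mpr ⟨a', mem_support_iff.mpr h2, hla'⟩)
      have hGPhom : (G - C x * P).IsHomogeneous (d + 1) := hGhom.sub (hPhom.C_mul x)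
      have hcoGP := hQRk (d + 1) _ hGPhom hvGP hGP
      -- coefficients of G lie in J f (k+1)
      have hcoG : ∀ a', G.coeff a' ∈ J f (k + 1) := by
        intro a'
        have h1 := hcoGP a'
        rw [coeff_sub, coeff_C_mul] at h1
        have h2 : G.coeff a' = (G.coeff a' - x * P.coeff a') + x * P.coeff a' := by ring
        rw [h2]
        refine Ideal.add_mem _ (J_mono f (Nat.le_succ k) h1) ?_
        exact Ideal.mul_mem_right _ _ (mem_J f (by simp))
      -- conclude for F
      have hcoXH : ∀ a', (monomial s 1 * H).coeff a' ∈ J f (k + 1) := by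
        intro a'
        classical
        rw [coeff_mul]
        refine Ideal.sum_mem _ fun p hp => ?_
        exact Ideal.mul_mem_left _ _ (hcoH p.2)
      have : F.coeff a = (monomial s 1 * H).coeff a + G.coeff a := by
        rw [← coeff_add, hFHG]
      rw [this]
      exact Ideal.add_mem _ (hcoXH a) (hcoG a)

end ColonRegularAux

/-- Lemma 2.10: if `I = (f 0, ..., f (m-1))` is generated by a regular sequence,
then the colon ideal `(I^n : f_j^i)` equals `I^(n-i)` for `n ≥ i > 0`. -/
theorem colon_pow_of_regular_sequence
    {R : Type*} [CommRing R] {m : ℕ} (f : Fin m → R)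
    (hreg : ∀ k : Fin m, ∀ r : R,
      r * f k ∈ Ideal.span (f '' {l : Fin m | l < k}) →
      r ∈ Ideal.span (f '' {l : Fin m | l < k}))
    (hproper : Ideal.span (Set.range f) ≠ ⊤)
    (I : Ideal R) (hI : I = Ideal.span (Set.range f))
    (n i : ℕ) (hi : 0 < i) (hni : i ≤ n) (j : Fin m) :
    Submodule.colon (I ^ n) (Ideal.span {f j ^ i}) = I ^ (n - i) := by
  classical
  open ColonRegularAux in
  have hIJ : I = J f m := by
    rw [hI, J]
    congr 1
    rw [show {l : Fin m | (l : ℕ) < m} = Set.univ from Set.eq_univ_of_forall fun l => l.isLt,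
      Set.image_univ]
  have hQR : QRp f m := QR_all f hreg m le_rfl
  have hfj : f j ∈ I := hIJ ▸ mem_J f j.isLt
  apply le_antisymm
  · -- hard direction
    intro r hr
    have hrg : r * f j ^ i ∈ I ^ n := by
      have := Submodule.mem_colon.mp hr (f j ^ i) (Ideal.subset_span rfl)
      rwa [smul_eq_mul] at this
    have claim : ∀ t, t ≤ n - i → r ∈ I ^ t := by
      intro t
      induction t with
      | zero => intro _; simp [Ideal.one_eq_top]
      | succ t ih =>
        intro ht
        have hrt : r ∈ I ^ t := ih (by omega)
        rw [hIJ] at hrt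
        obtain ⟨P, hPhom, hvP, heP⟩ := exists_poly f m t r hrt
        set Q := P * X j ^ i with hQ
        have hQhom : Q.IsHomogeneous (t + i) := hPhom.mul (isHomogeneous_X_pow _ _)
        have hvQ : ∀ l : Fin m, l ∈ Q.vars → (l : ℕ) < m := fun l _ => l.isLt
        have hevQ : MvPolynomial.eval f Q ∈ J f m ^ (t + i + 1) := by
          have h1 : MvPolynomial.eval f Q = r * f j ^ i := by
            rw [hQ, map_mul, map_pow, eval_X, heP]
          rw [h1, ← hIJ]
          exact Ideal.pow_le_pow_right (by omega) hrg
        have hcoQ := hQR (t + i) Q hQhom hvQ hevQ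
        have hcoP : ∀ a, P.coeff a ∈ J f m := by
          intro a
          have := hcoQ (a + Finsupp.single j i)
          rwa [hQ, X_pow_eq_monomial, coeff_mul_monomial, mul_one] at this
        have := eval_mem (I₀ := J f m) f hPhom hvP hcoP
        rw [heP] at this
        rw [hIJ, pow_succ']
        exact this
    exact claim (n - i) le_rfl
  · -- easy direction
    intro r hr
    rw [Submodule.mem_colon]
    intro p hp
    rw [SetLike.mem_coe, Ideal.mem_span_singleton'] at hp
    obtain ⟨c, rfl⟩ := hp
    rw [smul_eq_mul]
    have h1 : r * f j ^ i ∈ I ^ n := by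
      have : r * f j ^ i ∈ I ^ (n - i) * I ^ i :=
        Ideal.mul_mem_mul hr (Ideal.pow_mem_pow hfj i)
      rwa [← pow_add, Nat.sub_add_cancel hni] at this
    have : r * (c * f j ^ i) = c * (r * f j ^ i) := by ring
    rw [this]
    exact Ideal.mul_mem_left _ _ h1
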